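/- Let ω ∈ ℂ satisfy ω³ = 1 and ω ≠ 1, and let u₀ ∈ ℂ with 1 + ω·\overline{u₀} ≠ 0. Let A(u₀) = (1/√6)·[[1−u₀, 1−ωu₀], [√2, √2·ω²]], and let e₀ = (1,0) and e₁ = (0,1) be the standard basis vectors of ℂ². Then A(u₀)ᴴ is invertible and ‖(A(u₀)ᴴ)⁻¹·e₀‖² − 1 = 2·(1 + Re u₀)/|1 + ω·\overline{u₀}|² and ‖(A(u₀)ᴴ)⁻¹·e₁‖² − 1 = 2·(1 + Re(ω·u₀))/|1 + ω·\overline{u₀}|², where the products are matrix-vector products and ‖·‖ is the Euclidean norm on ℂ². -/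

import Mathlib

open Matrix

/-- The 2×2 matrix-valued function `A` from the example. -/
noncomputable def exA (ω u : ℂ) : Matrix (Fin 2) (Fin 2) ℂ :=
  ((Real.sqrt 6 : ℂ))⁻¹ •
    !![1 - u, 1 - ω * u; (Real.sqrt 2 : ℂ), (Real.sqrt 2 : ℂ) * ω ^ 2]

lemma normSq_col (N : Matrix (Fin 2) (Fin 2) ℂ) (j : Fin 2) :
    ‖(Matrix.toEuclideanLin N) (EuclideanSpace.single j 1)‖ ^ 2
      = Complex.normSq (N 0 j) + Complex.normSq (N 1 j) := by
  rw [Matrix.toEuclideanLin_apply]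
  rw [EuclideanSpace.norm_eq]
  rw [Real.sq_sqrt (by positivity)]
  simp [Fin.sum_univ_two, Matrix.mulVec_single, Complex.sq_norm]

set_option maxHeartbeats 1600000 in
theorem stmt15 (ω : ℂ) (hω3 : ω ^ 3 = 1) (hω1 : ω ≠ 1)
    (u₀ : ℂ) (hu₀ : 1 + ω * starRingEnd ℂ u₀ ≠ 0) :
    IsUnit ((exA ω u₀)ᴴ) ∧
      ‖(Matrix.toEuclideanLin (((exA ω u₀)ᴴ)⁻¹)) (EuclideanSpace.single 0 1)‖ ^ 2 - 1 =
        2 * (1 + u₀.re) / ‖1 + ω * starRingEnd ℂ u₀‖ ^ 2 ∧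
      ‖(Matrix.toEuclideanLin (((exA ω u₀)ᴴ)⁻¹)) (EuclideanSpace.single 1 1)‖ ^ 2 - 1 =
        2 * (1 + (ω * u₀).re) / ‖1 + ω * starRingEnd ℂ u₀‖ ^ 2 := by
  have hω0 : ω ≠ 0 := by intro h; rw [h] at hω3; norm_num at hω3
  have hω2 : ω ^ 2 + ω + 1 = 0 := by
    have h : (ω - 1) * (ω ^ 2 + ω + 1) = 0 := by linear_combination hω3
    rcases mul_eq_zero.mp h with h | h
    · exact absurd (sub_eq_zero.mp h) hω1
    · exact h
  have hRe : ω.re * ω.re - ω.im * ω.im + ω.re + 1 = 0 := by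
    have := congrArg Complex.re hω2
    simpa [pow_two, Complex.mul_re] using this
  have hIm : ω.re * ω.im + ω.im * ω.re + ω.im = 0 := by
    have := congrArg Complex.im hω2
    simpa [pow_two, Complex.mul_im] using this
  have him0 : ω.im ≠ 0 := by
    intro h
    rw [h] at hRe
    nlinarith [sq_nonneg (ω.re + 1/2)]
  have hre : ω.re = -1/2 := by
    have h2 : ω.im * (2 * ω.re + 1) = 0 := by linarith [hIm]
    rcases mul_eq_zero.mp h2 with h | h
    · exact absurd h him0
    · linarith
  have him : ω.im ^ 2 = 3/4 := by nlinarith [hRe]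
  have hnω : Complex.normSq ω = 1 := by
    simp only [Complex.normSq_apply, hre]; nlinarith [him]
  have hconj : starRingEnd ℂ ω = ω ^ 2 := by
    have h1 : ω * starRingEnd ℂ ω = ω * ω ^ 2 := by
      rw [Complex.mul_conj, hnω]; rw [show ω * ω ^ 2 = ω ^ 3 by ring, hω3]; norm_num
    exact mul_left_cancel₀ hω0 h1
  set v := starRingEnd ℂ u₀ with hv
  set s2 : ℂ := ((Real.sqrt 2 : ℝ) : ℂ) with hs2def
  set s6 : ℂ := ((Real.sqrt 6 : ℝ) : ℂ) with hs6def
  have hs2 : s2 ^ 2 = 2 := by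
    rw [hs2def]; norm_cast; rw [Real.sq_sqrt]; norm_num
  have hs6 : s6 ^ 2 = 6 := by
    rw [hs6def]; norm_cast; rw [Real.sq_sqrt]; norm_num
  have hs2ne : s2 ≠ 0 := by intro h; rw [h] at hs2; norm_num at hs2
  have hs6ne : s6 ≠ 0 := by intro h; rw [h] at hs6; norm_num at hs6
  have hωm1 : ω - 1 ≠ 0 := sub_ne_zero.mpr hω1
  have hω4 : ω ^ 4 = ω := by linear_combination ω * hω3
  have hω5 : ω ^ 5 = ω ^ 2 := by linear_combination ω ^ 2 * hω3
  have hω6 : ω ^ 6 = 1 := by linear_combination (ω ^ 3 + 1) * hω3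
  have hω7 : ω ^ 7 = ω := by linear_combination (ω ^ 4 + ω) * hω3
  have hω8 : ω ^ 8 = ω ^ 2 := by linear_combination (ω ^ 5 + ω ^ 2) * hω3
  set k : ℂ := (ω - 1) * (1 + ω * v) with hkdef
  have hk : k ≠ 0 := mul_ne_zero hωm1 hu₀
  set N : Matrix (Fin 2) (Fin 2) ℂ :=
    !![s6 * ω / k, -(s6 / k);
       -(s6 * (1 - ω ^ 2 * v) / (s2 * k)), s6 * (1 - v) / (s2 * k)] with hN
  have hBN : (exA ω u₀)ᴴ * N = 1 := by
    ext i j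
    fin_cases i <;> fin_cases j <;>
      simp [exA, Matrix.mul_apply, Fin.sum_univ_two, Matrix.conjTranspose_apply, hN,
        Complex.conj_ofReal, hconj, map_pow] <;>
      simp only [← hs2def, ← hs6def, ← hv, hkdef] <;> field_simp <;> grind
  have hUnit : IsUnit ((exA ω u₀)ᴴ) :=
    (Matrix.isUnit_iff_isUnit_det _).mpr (Matrix.isUnit_det_of_right_inverse hBN)
  have hInv : ((exA ω u₀)ᴴ)⁻¹ = N := Matrix.inv_eq_right_inv hBN
  have hD : Complex.normSq (1 + ω * v) ≠ 0 := fun h => hu₀ (Complex.normSq_eq_zero.mp h)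
  have hnk : Complex.normSq k = 3 * Complex.normSq (1 + ω * v) := by
    rw [hkdef, Complex.normSq_mul]
    have h3 : Complex.normSq (ω - 1) = 3 := by
      simp only [Complex.normSq_apply, Complex.sub_re, Complex.sub_im, Complex.one_re,
        Complex.one_im, hre]
      nlinarith [him]
    rw [h3]
  have hn2 : Complex.normSq s2 = 2 := by
    rw [hs2def, Complex.normSq_ofReal, Real.mul_self_sqrt]; norm_num
  have hn6 : Complex.normSq s6 = 6 := by
    rw [hs6def, Complex.normSq_ofReal, Real.mul_self_sqrt]; norm_num
  have key0 : Complex.normSq (1 - ω ^ 2 * v) = Complex.normSq (1 + ω * v) + 2 * u₀.re := by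
    have hω2' : ω ^ 2 = -1 - ω := by linear_combination hω2
    rw [hω2', hv]
    simp only [Complex.normSq_apply, Complex.sub_re, Complex.sub_im, Complex.add_re,
      Complex.add_im, Complex.one_re, Complex.one_im, Complex.mul_re, Complex.mul_im,
      Complex.neg_re, Complex.neg_im, Complex.conj_re, Complex.conj_im, hre]
    ring
  refine ⟨hUnit, ?_, ?_⟩
  · rw [hInv, normSq_col, Complex.sq_norm]
    have e00 : N 0 0 = s6 * ω / k := by rw [hN]; simp
    have e10 : N 1 0 = -(s6 * (1 - ω ^ 2 * v) / (s2 * k)) := by rw [hN]; simp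
    rw [e00, e10]
    clear e00 e10 hBN hInv hUnit hN
    clear N
    clear_value v s2 s6 k
    simp only [map_div₀, Complex.normSq_mul, Complex.normSq_neg, hn6, hn2, hnω, hnk, key0]
    field_simp
    ring
  · rw [hInv, normSq_col, Complex.sq_norm]
    have e01 : N 0 1 = -(s6 / k) := by rw [hN]; simp
    have e11 : N 1 1 = s6 * (1 - v) / (s2 * k) := by rw [hN]; simp
    rw [e01, e11]
    clear e01 e11 hBN hInv hUnit hN
    clear N
    clear_value v s2 s6 k
    simp only [map_div₀, Complex.normSq_mul, Complex.normSq_neg, hn6, hn2, hnω, hnk]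
    have key1 : Complex.normSq (1 - v) = Complex.normSq (1 + ω * v) + 2 * (ω * u₀).re := by
      rw [hv]
      simp only [Complex.normSq_apply, Complex.sub_re, Complex.sub_im, Complex.add_re,
        Complex.add_im, Complex.one_re, Complex.one_im, Complex.mul_re, Complex.mul_im,
        Complex.conj_re, Complex.conj_im, hre]
      linear_combination (-(u₀.re ^ 2 + u₀.im ^ 2)) * him
    rw [key1]
    field_simp
    ring
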